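/- Let s, b, ρ, σ₁₁, σ₂₂, σ₃₃ be real numbers with s > 0, b > 0, ρ > 0, σ₁₁² < 2s, σ₂₂² < 2 and σ₃₃² < 2b. Then there exist α₂ > 0 and α₃ ≥ 0 such that for all x, y, z ∈ ℝ: ρ·x·s(y − x) + s·y·(x(ρ − z) − y) + s·(z − 2ρ)·(xy − bz) + (1/2)·(ρσ₁₁²x² + sσ₂₂²y² + sσ₃₃²z²) ≤ −α₂·(ρx² + sy² + s(z − 2ρ)²) + α₃. -/
import Mathlib


/-- Mean-square dissipativity estimate for the stochastic Lorenz system with diagonal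
linear multiplicative noise, with Lyapunov function `V(x,y,z) = ρx² + sy² + s(z−2ρ)²`. -/
theorem lorenz_dissipative
    (s b ρ σ₁₁ σ₂₂ σ₃₃ : ℝ)
    (hs : 0 < s) (hb : 0 < b) (hρ : 0 < ρ)
    (h₁₁ : σ₁₁ ^ 2 < 2 * s) (h₂₂ : σ₂₂ ^ 2 < 2) (h₃₃ : σ₃₃ ^ 2 < 2 * b) :
    ∃ α₂ : ℝ, 0 < α₂ ∧ ∃ α₃ : ℝ, 0 ≤ α₃ ∧ ∀ x y z : ℝ,
      ρ * x * (s * (y - x)) + s * y * (x * (ρ - z) - y) +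
          s * (z - 2 * ρ) * (x * y - b * z) +
          (1 / 2) * (ρ * σ₁₁ ^ 2 * x ^ 2 + s * σ₂₂ ^ 2 * y ^ 2 + s * σ₃₃ ^ 2 * z ^ 2) ≤
        -α₂ * (ρ * x ^ 2 + s * y ^ 2 + s * (z - 2 * ρ) ^ 2) + α₃ := by
  obtain ⟨A, hA⟩ : ∃ A : ℝ, A = s - σ₁₁ ^ 2 / 2 := ⟨_, rfl⟩
  obtain ⟨C, hC⟩ : ∃ C : ℝ, C = 1 - σ₂₂ ^ 2 / 2 := ⟨_, rfl⟩
  obtain ⟨D, hD⟩ : ∃ D : ℝ, D = b - σ₃₃ ^ 2 / 2 := ⟨_, rfl⟩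
  obtain ⟨m, hmpos, hmA, hmC, hmD⟩ :
      ∃ m : ℝ, 0 < m ∧ m ≤ A ∧ m ≤ C ∧ m ≤ D := by
    refine ⟨min A (min C D), ?_, min_le_left _ _,
      (min_le_right _ _).trans (min_le_left _ _),
      (min_le_right _ _).trans (min_le_right _ _)⟩
    have hApos : 0 < A := by rw [hA]; nlinarith
    have hCpos : 0 < C := by rw [hC]; nlinarith
    have hDpos : 0 < D := by rw [hD]; nlinarith
    exact lt_min hApos (lt_min hCpos hDpos)
  obtain ⟨K, hKdef⟩ : ∃ K : ℝ, K = D - m / 2 := ⟨_, rfl⟩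
  have hKpos : 0 < K := by rw [hKdef]; linarith
  refine ⟨m / 2, by positivity, s * (4 * ρ ^ 2 * (m / 2) + ρ ^ 2 * (b - m) ^ 2 / K),
    by positivity, ?_⟩
  intro x y z
  have key : 0 ≤ K * z ^ 2 - 2 * ρ * (b - m) * z + ρ ^ 2 * (b - m) ^ 2 / K := by
    have h1 : ρ ^ 2 * (b - m) ^ 2 / K * K = ρ ^ 2 * (b - m) ^ 2 :=
      div_mul_cancel₀ _ hKpos.ne'
    nlinarith [sq_nonneg (K * z - ρ * (b - m)), hKpos, sq_nonneg z]
  have hx : ρ * σ₁₁ ^ 2 * x ^ 2 = 2 * ρ * (s - A) * x ^ 2 := by rw [hA]; ring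
  have hy : s * σ₂₂ ^ 2 * y ^ 2 = 2 * s * (1 - C) * y ^ 2 := by rw [hC]; ring
  have hz : s * σ₃₃ ^ 2 * z ^ 2 = 2 * s * (b - K - m / 2) * z ^ 2 := by rw [hKdef, hD]; ring
  rw [hx, hy, hz]
  nlinarith [mul_nonneg hs.le key,
    mul_nonneg (mul_nonneg hρ.le (by linarith : (0:ℝ) ≤ A - m / 2)) (sq_nonneg x),
    mul_nonneg (mul_nonneg hs.le (by linarith : (0:ℝ) ≤ C - m / 2)) (sq_nonneg y)]
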